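/- arXiv:math/0508125 — 3 statements merged into one kernel-verified Lean document; each statement's English description precedes it below -/
import Mathlib

section
/- For every integer k ≥ 2 there exists a constant C(k) > 0 such that for every sequence of complex numbers (a_n), every integer M, and all positive integers Q and N, one has ∑_{q=1}^{Q} ∑_{a mod q^k, gcd(a,q)=1} | ∑_{n=M+1}^{M+N} a_n e(a n / q^k) |² ≤ C(k) · Q·(Q^k + N) · ∑_{n=M+1}^{M+N} |a_n|². -/
open Finset Real

noncomputable def e (x : ℝ) : ℂ := Complex.exp (2 * Real.pi * Complex.I * x)


lemma e_pow (x : ℝ) (r : ℕ) : e x ^ r = e (r * x) := by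
  rw [e, e, ← Complex.exp_nat_mul]
  congr 1; push_cast; ring

lemma e_int (t : ℤ) : e (t : ℝ) = 1 := by
  rw [e]
  have := Complex.exp_int_mul_two_pi_mul_I t
  rw [← this]; congr 1; push_cast; ring

lemma e_conj (x : ℝ) : (starRingEnd ℂ) (e x) = e (-x) := by
  rw [e, e, ← Complex.exp_conj]; congr 1
  simp only [map_mul, Complex.conj_I, Complex.conj_ofReal, map_ofNat]
  push_cast; ring

lemma e_mul (x y : ℝ) : e x * e y = e (x + y) := by
  rw [e, e, e, ← Complex.exp_add]; congr 1; push_cast; ring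

lemma e_sum (D : ℕ) (hD : 0 < D) (t : ℤ) :
    ∑ r ∈ range D, e (((r : ℝ) * t) / D) = if (D : ℤ) ∣ t then (D : ℂ) else 0 := by
  have hDR : (D : ℝ) ≠ 0 := Nat.cast_ne_zero.mpr hD.ne'
  have h1 : ∀ r ∈ range D, e (((r : ℝ) * t) / D) = e ((t : ℝ) / D) ^ r := by
    intro r _; rw [e_pow]; congr 1; ring
  rw [Finset.sum_congr rfl h1]
  by_cases h : (D : ℤ) ∣ t
  · obtain ⟨c, rfl⟩ := h
    have h2 : e (((((D : ℤ) * c) : ℤ) : ℝ) / D) = 1 := by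
      have : ((((D : ℤ) * c) : ℤ) : ℝ) / D = ((c : ℤ) : ℝ) := by push_cast; field_simp
      rw [this, e_int]
    rw [h2]
    simp [if_pos (dvd_mul_right _ _)]
  · rw [if_neg h]
    have hne : e ((t : ℝ) / D) ≠ 1 := by
      intro hcon
      rw [e, Complex.exp_eq_one_iff] at hcon
      obtain ⟨n, hn⟩ := hcon
      apply h
      refine ⟨n, ?_⟩
      rw [mul_comm]
      have h2 : (2 * (π : ℂ) * Complex.I) ≠ 0 := by
        simp [Real.pi_ne_zero, Complex.I_ne_zero, Complex.ofReal_ne_zero]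
      have h3 : ((t : ℝ) / D : ℂ) = (n : ℂ) := by
        field_simp at hn
        have hn' : ((t:ℂ)/(D:ℂ)) * (2 * (π:ℂ) * Complex.I) = (n:ℂ) * (2 * (π:ℂ) * Complex.I) := by
          rw [← hn]; push_cast; ring
        push_cast
        exact mul_right_cancel₀ h2 hn'
      have h4 : (t : ℝ) / D = (n : ℝ) := by exact_mod_cast h3
      have h5 : (t : ℝ) = n * D := by field_simp at h4; linarith
      exact_mod_cast h5
    rw [geom_sum_eq hne]
    have h6 : e ((t : ℝ) / D) ^ D = 1 := by
      rw [e_pow]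
      have : (D : ℝ) * ((t : ℝ) / D) = ((t : ℤ) : ℝ) := by field_simp
      rw [this, e_int]
    rw [h6]; simp


lemma count_lemma (D N : ℕ) (hD : 0 < D) (hN : 0 < N) (M n : ℤ) :
    (D : ℝ) * ((Finset.Icc (M+1) (M+(N:ℤ))).filter (fun m => (D:ℤ) ∣ (n - m))).card
      ≤ (D : ℝ) + N := by
  have hDZ : (0:ℤ) < D := by exact_mod_cast hD
  set S := (Finset.Icc (M+1) (M+(N:ℤ))).filter (fun m => (D:ℤ) ∣ (n - m)) with hS
  have hcard : (S.card : ℤ) ≤ ((N:ℤ) - 1) / D + 1 := by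
    have hinj : ∀ m ∈ S, ∀ m' ∈ S,
        (m - (M+1)) / (D:ℤ) = (m' - (M+1)) / (D:ℤ) → m = m' := by
      intro m hm m' hm' hq
      simp only [hS, Finset.mem_filter] at hm hm'
      have hd : (D:ℤ) ∣ (m - m') := by
        have := dvd_sub hm'.2 hm.2
        simpa using this
      have hmeq : m ≡ m' [ZMOD (D:ℤ)] := Int.modEq_iff_dvd.mpr (by
        have : (D:ℤ) ∣ -(m - m') := dvd_neg.mpr hd
        simpa using this)
      have hmod : (m - (M+1)) % D = (m' - (M+1)) % D := hmeq.sub_right (M+1)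
      have e1 := Int.mul_ediv_add_emod (m - (M+1)) D
      have e2 := Int.mul_ediv_add_emod (m' - (M+1)) D
      rw [hq, hmod] at e1
      linarith [e1, e2]
    have hmaps : ∀ m ∈ S, (m - (M+1)) / (D:ℤ) ∈ Finset.Icc (0:ℤ) (((N:ℤ)-1)/D) := by
      intro m hm
      simp only [hS, Finset.mem_filter, Finset.mem_Icc] at hm
      rw [Finset.mem_Icc]
      constructor
      · exact Int.ediv_nonneg (by omega) (by omega)
      · exact Int.ediv_le_ediv hDZ (by omega)
    have := Finset.card_le_card_of_injOn _ hmaps (fun m hm m' hm' => hinj m hm m' hm')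
    have hc : (Finset.Icc (0:ℤ) (((N:ℤ)-1)/D)).card = (((N:ℤ)-1)/D + 1).toNat := by
      rw [Int.card_Icc]; congr 1; omega
    rw [hc] at this
    have hnn : (0:ℤ) ≤ ((N:ℤ)-1)/D := Int.ediv_nonneg (by omega) (by omega)
    omega
  have hdiv : (D:ℤ) * (((N:ℤ) - 1) / D) ≤ (N:ℤ) - 1 := by
    have e3 := Int.mul_ediv_add_emod ((N:ℤ) - 1) D
    have e4 := Int.emod_nonneg ((N:ℤ) - 1) (by omega : (D:ℤ) ≠ 0)
    linarith
  have key : (D:ℤ) * S.card ≤ (D:ℤ) + N := by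
    calc (D:ℤ) * S.card ≤ (D:ℤ) * (((N:ℤ)-1)/D + 1) := by
          exact mul_le_mul_of_nonneg_left hcard (by omega)
      _ = (D:ℤ) * (((N:ℤ)-1)/D) + D := by ring
      _ ≤ (N:ℤ) - 1 + D := by linarith
      _ ≤ (D:ℤ) + N := by omega
  exact_mod_cast key

lemma key_lemma (D N : ℕ) (hD : 0 < D) (hN : 0 < N) (M : ℤ) (a : ℤ → ℂ) :
    ∑ r ∈ range D,
      ‖∑ n ∈ Finset.Icc (M+1) (M+(N:ℤ)), a n * e (((r:ℝ) * (n:ℝ)) / (D:ℝ))‖ ^ 2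
    ≤ ((D:ℝ) + N) * ∑ n ∈ Finset.Icc (M+1) (M+(N:ℤ)), ‖a n‖ ^ 2 := by
  set I := Finset.Icc (M+1) (M+(N:ℤ)) with hI
  set S : ℕ → ℂ := fun r => ∑ n ∈ I, a n * e (((r:ℝ) * (n:ℝ)) / (D:ℝ)) with hSdef
  -- Step 1: LHS = re of complex sum
  have step1 : ∑ r ∈ range D, ‖S r‖ ^ 2
      = (∑ r ∈ range D, S r * (starRingEnd ℂ) (S r)).re := by
    rw [Complex.re_sum]
    refine Finset.sum_congr rfl fun r _ => ?_
    rw [Complex.mul_conj, Complex.ofReal_re, Complex.sq_norm]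
  -- Step 2: expand and use orthogonality
  have step2 : ∑ r ∈ range D, S r * (starRingEnd ℂ) (S r)
      = ∑ n ∈ I, ∑ m ∈ I, (a n * (starRingEnd ℂ) (a m)) *
          (if (D:ℤ) ∣ (n - m) then (D:ℂ) else 0) := by
    have expand : ∀ r ∈ range D, S r * (starRingEnd ℂ) (S r)
        = ∑ n ∈ I, ∑ m ∈ I, (a n * (starRingEnd ℂ) (a m)) * e (((r:ℝ) * ((n - m : ℤ) : ℝ)) / (D:ℝ)) := by
      intro r _
      rw [hSdef]
      rw [map_sum, Finset.sum_mul_sum]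
      refine Finset.sum_congr rfl fun n _ => Finset.sum_congr rfl fun m _ => ?_
      rw [map_mul, e_conj]
      have : e (((r:ℝ) * (n:ℝ)) / (D:ℝ)) * e (-(((r:ℝ) * (m:ℝ)) / (D:ℝ)))
          = e (((r:ℝ) * ((n - m : ℤ) : ℝ)) / (D:ℝ)) := by
        rw [e_mul]; congr 1; push_cast; ring
      calc a n * e (((r:ℝ) * (n:ℝ)) / (D:ℝ)) * ((starRingEnd ℂ) (a m) * e (-(((r:ℝ) * (m:ℝ)) / (D:ℝ))))
          = (a n * (starRingEnd ℂ) (a m)) * (e (((r:ℝ) * (n:ℝ)) / (D:ℝ)) * e (-(((r:ℝ) * (m:ℝ)) / (D:ℝ)))) := by ring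
        _ = _ := by rw [this]
    rw [Finset.sum_congr rfl expand, Finset.sum_comm]
    refine Finset.sum_congr rfl fun n _ => ?_
    rw [Finset.sum_comm]
    refine Finset.sum_congr rfl fun m _ => ?_
    rw [← Finset.mul_sum, e_sum D hD (n - m)]
  -- Step 3: bound the real part
  have step3 : (∑ n ∈ I, ∑ m ∈ I, (a n * (starRingEnd ℂ) (a m)) *
          (if (D:ℤ) ∣ (n - m) then (D:ℂ) else 0)).re
      ≤ ∑ n ∈ I, ∑ m ∈ I,
          (if (D:ℤ) ∣ (n - m) then (D:ℝ) * ((‖a n‖ ^ 2 + ‖a m‖ ^ 2) / 2) else 0) := by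
    rw [Complex.re_sum]
    refine Finset.sum_le_sum fun n _ => ?_
    rw [Complex.re_sum]
    refine Finset.sum_le_sum fun m _ => ?_
    by_cases h : (D:ℤ) ∣ (n - m)
    · rw [if_pos h, if_pos h]
      have h1 : ((a n * (starRingEnd ℂ) (a m)) * (D:ℂ)).re
          ≤ ‖(a n * (starRingEnd ℂ) (a m)) * (D:ℂ)‖ := Complex.re_le_norm _
      have h2 : ‖(a n * (starRingEnd ℂ) (a m)) * (D:ℂ)‖
          = ‖a n‖ * ‖a m‖ * D := by
        rw [norm_mul, norm_mul, Complex.norm_conj]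
        simp
      have h3 : ‖a n‖ * ‖a m‖
          ≤ (‖a n‖ ^ 2 + ‖a m‖ ^ 2) / 2 := by
        nlinarith [sq_nonneg (‖a n‖ - ‖a m‖)]
      have hDpos : (0:ℝ) ≤ (D:ℝ) := Nat.cast_nonneg D
      calc ((a n * (starRingEnd ℂ) (a m)) * (D:ℂ)).re
          ≤ ‖a n‖ * ‖a m‖ * D := by rw [← h2]; exact h1
        _ ≤ (D:ℝ) * ((‖a n‖ ^ 2 + ‖a m‖ ^ 2) / 2) := by nlinarith
    · rw [if_neg h, if_neg h]; simp
  -- Step 4: counting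
  have step4 : ∑ n ∈ I, ∑ m ∈ I,
          (if (D:ℤ) ∣ (n - m) then (D:ℝ) * ((‖a n‖ ^ 2 + ‖a m‖ ^ 2) / 2) else 0)
      ≤ ((D:ℝ) + N) * ∑ n ∈ I, ‖a n‖ ^ 2 := by
    have split : ∀ n ∈ I, ∀ m ∈ I,
        (if (D:ℤ) ∣ (n - m) then (D:ℝ) * ((‖a n‖ ^ 2 + ‖a m‖ ^ 2) / 2) else 0)
        = (if (D:ℤ) ∣ (n - m) then (D:ℝ) * ‖a n‖ ^ 2 / 2 else 0)
          + (if (D:ℤ) ∣ (n - m) then (D:ℝ) * ‖a m‖ ^ 2 / 2 else 0) := by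
      intro n _ m _
      by_cases h : (D:ℤ) ∣ (n - m) <;> simp [h] <;> ring
    rw [Finset.sum_congr rfl fun n hn => Finset.sum_congr rfl fun m hm => split n hn m hm]
    rw [Finset.sum_congr rfl fun n (hn : n ∈ I) => Finset.sum_add_distrib]
    rw [Finset.sum_add_distrib]
    -- second double sum equals first after swapping (using dvd symmetry)
    have swap : ∑ n ∈ I, ∑ m ∈ I, (if (D:ℤ) ∣ (n - m) then (D:ℝ) * ‖a m‖ ^ 2 / 2 else 0)
        = ∑ n ∈ I, ∑ m ∈ I, (if (D:ℤ) ∣ (n - m) then (D:ℝ) * ‖a n‖ ^ 2 / 2 else 0) := by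
      rw [Finset.sum_comm]
      refine Finset.sum_congr rfl fun n _ => Finset.sum_congr rfl fun m _ => ?_
      congr 1
      simp only [eq_iff_iff]
      constructor
      · intro h; have := dvd_neg.mpr h; simpa using this
      · intro h; have := dvd_neg.mpr h; simpa using this
    rw [swap]
    have inner : ∀ n ∈ I, ∑ m ∈ I, (if (D:ℤ) ∣ (n - m) then (D:ℝ) * ‖a n‖ ^ 2 / 2 else 0)
        = ((I.filter (fun m => (D:ℤ) ∣ (n - m))).card : ℝ) * ((D:ℝ) * ‖a n‖ ^ 2 / 2) := by
      intro n _
      rw [← Finset.sum_filter, Finset.sum_const, nsmul_eq_mul]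
    rw [Finset.sum_congr rfl inner]
    have combine : ∑ n ∈ I, ((I.filter (fun m => (D:ℤ) ∣ (n - m))).card : ℝ) * ((D:ℝ) * ‖a n‖ ^ 2 / 2)
        + ∑ n ∈ I, ((I.filter (fun m => (D:ℤ) ∣ (n - m))).card : ℝ) * ((D:ℝ) * ‖a n‖ ^ 2 / 2)
        = ∑ n ∈ I, ((D:ℝ) * ((I.filter (fun m => (D:ℤ) ∣ (n - m))).card : ℝ)) * ‖a n‖ ^ 2 := by
      rw [← Finset.sum_add_distrib]
      exact Finset.sum_congr rfl fun n _ => by ring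
    rw [combine, Finset.mul_sum]
    refine Finset.sum_le_sum fun n hn => ?_
    have hcount := count_lemma D N hD hN M n
    have habs : (0:ℝ) ≤ ‖a n‖ ^ 2 := sq_nonneg _
    rw [← hI] at hcount
    exact mul_le_mul_of_nonneg_right hcount habs
  calc ∑ r ∈ range D, ‖S r‖ ^ 2
      = (∑ r ∈ range D, S r * (starRingEnd ℂ) (S r)).re := step1
    _ = (∑ n ∈ I, ∑ m ∈ I, (a n * (starRingEnd ℂ) (a m)) *
          (if (D:ℤ) ∣ (n - m) then (D:ℂ) else 0)).re := by rw [step2]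
    _ ≤ _ := le_trans step3 step4

theorem stmt11 (k : ℕ) (hk : 2 ≤ k) : ∃ C : ℝ, C > 0 ∧
    ∀ (a : ℤ → ℂ) (M : ℤ) (Q N : ℕ), 0 < Q → 0 < N →
    ∑ q ∈ Finset.Icc 1 Q, ∑ r ∈ (Finset.range (q^k)).filter (fun r => Nat.gcd r q = 1),
      ‖∑ n ∈ Finset.Icc (M+1) (M+(N:ℤ)), a n * e (((r:ℝ) * (n:ℝ)) / (q:ℝ)^k)‖ ^ 2
    ≤ C * (Q:ℝ) * ((Q:ℝ)^k + (N:ℝ)) *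
        ∑ n ∈ Finset.Icc (M+1) (M+(N:ℤ)), ‖a n‖ ^ 2 := by
  refine ⟨1, one_pos, ?_⟩
  intro a M Q N hQ hN
  set X := ∑ n ∈ Finset.Icc (M+1) (M+(N:ℤ)), ‖a n‖ ^ 2 with hX
  have hXnn : 0 ≤ X := Finset.sum_nonneg fun n _ => sq_nonneg _
  have per_q : ∀ q ∈ Finset.Icc 1 Q,
      ∑ r ∈ (Finset.range (q^k)).filter (fun r => Nat.gcd r q = 1),
        ‖∑ n ∈ Finset.Icc (M+1) (M+(N:ℤ)), a n * e (((r:ℝ) * (n:ℝ)) / (q:ℝ)^k)‖ ^ 2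
      ≤ ((Q:ℝ)^k + (N:ℝ)) * X := by
    intro q hq
    rw [Finset.mem_Icc] at hq
    have hq1 : 0 < q := hq.1
    have hD : 0 < q ^ k := Nat.pow_pos hq1
    have hcast : ((q^k : ℕ) : ℝ) = (q:ℝ)^k := by push_cast; ring
    have hsub : ∑ r ∈ (Finset.range (q^k)).filter (fun r => Nat.gcd r q = 1),
        ‖∑ n ∈ Finset.Icc (M+1) (M+(N:ℤ)), a n * e (((r:ℝ) * (n:ℝ)) / (q:ℝ)^k)‖ ^ 2
        ≤ ∑ r ∈ Finset.range (q^k),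
        ‖∑ n ∈ Finset.Icc (M+1) (M+(N:ℤ)), a n * e (((r:ℝ) * (n:ℝ)) / (q:ℝ)^k)‖ ^ 2 :=
      Finset.sum_le_sum_of_subset_of_nonneg (Finset.filter_subset _ _)
        (fun r _ _ => sq_nonneg _)
    have hkey := key_lemma (q^k) N hD hN M a
    rw [hcast] at hkey
    refine le_trans hsub (le_trans hkey ?_)
    have hpow : ((q:ℝ))^k ≤ ((Q:ℝ))^k := by
      apply pow_le_pow_left₀ (by positivity)
      exact_mod_cast hq.2
    have h1 : ((q:ℝ)^k + (N:ℝ)) ≤ ((Q:ℝ)^k + (N:ℝ)) := by linarith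
    exact mul_le_mul_of_nonneg_right h1 hXnn
  calc ∑ q ∈ Finset.Icc 1 Q, ∑ r ∈ (Finset.range (q^k)).filter (fun r => Nat.gcd r q = 1),
        ‖∑ n ∈ Finset.Icc (M+1) (M+(N:ℤ)), a n * e (((r:ℝ) * (n:ℝ)) / (q:ℝ)^k)‖ ^ 2
      ≤ ∑ _q ∈ Finset.Icc 1 Q, ((Q:ℝ)^k + (N:ℝ)) * X := Finset.sum_le_sum per_q
    _ = (Q:ℝ) * (((Q:ℝ)^k + (N:ℝ)) * X) := by
        rw [Finset.sum_const, Nat.card_Icc, nsmul_eq_mul]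
        norm_num
    _ = 1 * (Q:ℝ) * ((Q:ℝ)^k + (N:ℝ)) * X := by ring
end

section
/- For every positive integer q, every integer M, every positive integer N, and every sequence of complex numbers (a_n), one has ∑*_{χ mod q²} | ∑_{n=M+1}^{M+N} a_n χ(n) |² ≤ (φ(q)/q) · ∑_{a mod q², gcd(a,q)=1} | ∑_{n=M+1}^{M+N} a_n e(a n / q²) |², where ∑* denotes summation over primitive Dirichlet characters modulo q². -/
open Finset Real
open scoped Classical

section Helpers
set_option linter.unusedSectionVars false
variable {N : ℕ} [NeZero N]

lemma factorsThrough_inv (χ : DirichletCharacter ℂ N) {d : ℕ} (h : χ.FactorsThrough d) :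
    (χ⁻¹).FactorsThrough d := by
  obtain ⟨hd, χ₀, hχ⟩ := h
  exact ⟨hd, χ₀⁻¹, by rw [map_inv, ← hχ]⟩

lemma inv_primitive {χ : DirichletCharacter ℂ N} (h : χ.IsPrimitive) : (χ⁻¹).IsPrimitive := by
  rw [DirichletCharacter.isPrimitive_def]
  refine le_antisymm (Nat.le_of_dvd (Nat.pos_of_ne_zero (NeZero.ne N)) (χ⁻¹).conductor_dvd_level) ?_
  have h2 := factorsThrough_inv χ⁻¹ (χ⁻¹).factorsThrough_conductor
  rw [inv_inv] at h2
  calc N = χ.conductor := h.symm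
  _ ≤ (χ⁻¹).conductor := Nat.sInf_le h2


lemma sum_one_char : ∑ a : ZMod N, (1 : DirichletCharacter ℂ N) a = (N.totient : ℂ) := by
  rw [MulChar.sum_one_eq_card_units, ZMod.card_units_eq_totient]

lemma char_mul_inv_self (χ : DirichletCharacter ℂ N) (t : ZMod N) :
    χ⁻¹ t * χ t = (1 : DirichletCharacter ℂ N) t := by
  rw [← inv_mul_cancel χ, MulChar.coeToFun_mul, Pi.mul_apply]

lemma gauss_norm {χ : DirichletCharacter ℂ N} (hχ : χ.IsPrimitive) :
    gaussSum χ (ZMod.stdAddChar) * (starRingEnd ℂ) (gaussSum χ (ZMod.stdAddChar)) = (N : ℂ) := by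
  set ψ : AddChar (ZMod N) ℂ := ZMod.stdAddChar with hψdef
  have hψ : ψ.IsPrimitive := ZMod.isPrimitive_stdAddChar N
  have hchar : 0 < ringChar (ZMod N) := by
    rw [ZMod.ringChar_zmod_n]; exact Nat.pos_of_ne_zero (NeZero.ne N)
  have key : ∑ t : ZMod N, gaussSum χ (ψ.mulShift t) * (starRingEnd ℂ) (gaussSum χ (ψ.mulShift t))
      = (N.totient : ℂ) * (gaussSum χ ψ * (starRingEnd ℂ) (gaussSum χ ψ)) := by
    simp_rw [gaussSum_mulShift_of_isPrimitive ψ hχ, map_mul]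
    have h1 : ∀ t : ZMod N, χ⁻¹ t * gaussSum χ ψ *
        ((starRingEnd ℂ) (χ⁻¹ t) * (starRingEnd ℂ) (gaussSum χ ψ))
        = (1 : DirichletCharacter ℂ N) t * (gaussSum χ ψ * (starRingEnd ℂ) (gaussSum χ ψ)) := by
      intro t
      have h2 : (starRingEnd ℂ) (χ⁻¹ t) = χ t := by
        rw [← RCLike.star_def, MulChar.star_apply', inv_inv]
      rw [h2, ← char_mul_inv_self χ t]
      ring
    simp_rw [h1, ← Finset.sum_mul, sum_one_char]
  have key2 : ∑ t : ZMod N, gaussSum χ (ψ.mulShift t) * (starRingEnd ℂ) (gaussSum χ (ψ.mulShift t))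
      = (N.totient : ℂ) * (N : ℂ) := by
    have expand : ∀ t : ZMod N, gaussSum χ (ψ.mulShift t) * (starRingEnd ℂ) (gaussSum χ (ψ.mulShift t))
        = ∑ x : ZMod N, ∑ y : ZMod N, χ x * (starRingEnd ℂ) (χ y) * ψ (t * (x - y)) := by
      intro t
      rw [gaussSum, map_sum, Finset.sum_mul_sum]
      refine Finset.sum_congr rfl fun x _ => Finset.sum_congr rfl fun y _ => ?_
      rw [map_mul, AddChar.starComp_apply hchar, AddChar.inv_apply, AddChar.mulShift_apply,
        AddChar.mulShift_apply, show t * (x - y) = t * x + t * -y by ring, AddChar.map_add_eq_mul]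
      ring
    simp_rw [expand]
    rw [Finset.sum_comm]
    have swap : ∀ x : ZMod N, ∑ t : ZMod N, ∑ y : ZMod N, χ x * (starRingEnd ℂ) (χ y) * ψ (t * (x - y))
        = ∑ y : ZMod N, χ x * (starRingEnd ℂ) (χ y) * ∑ t : ZMod N, ψ (t * (x - y)) := by
      intro x
      rw [Finset.sum_comm]
      exact Finset.sum_congr rfl fun y _ => by rw [Finset.mul_sum]
    simp_rw [swap, AddChar.sum_mulShift _ hψ]
    have collapse : ∀ x : ZMod N, ∑ y : ZMod N, χ x * (starRingEnd ℂ) (χ y) *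
        (if x - y = 0 then (Fintype.card (ZMod N) : ℂ) else 0)
        = (1 : DirichletCharacter ℂ N) x * (N : ℂ) := by
      intro x
      rw [Finset.sum_eq_single x]
      · rw [sub_self, if_pos rfl, ZMod.card]
        have h3 : (starRingEnd ℂ) (χ x) = χ⁻¹ x := by rw [← RCLike.star_def, MulChar.star_apply']
        rw [h3, show χ x * χ⁻¹ x * (N:ℂ) = χ⁻¹ x * χ x * (N:ℂ) by ring, char_mul_inv_self χ x]
      · intro y _ hy
        rw [if_neg (fun h => hy (sub_eq_zero.mp h).symm), mul_zero]
      · intro h; exact absurd (Finset.mem_univ x) h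
    simp_rw [Nat.cast_ite, Nat.cast_zero]
    simp_rw [collapse]
    rw [← Finset.sum_mul, sum_one_char]
  rw [key] at key2
  have ht : (N.totient : ℂ) ≠ 0 := by
    exact_mod_cast Nat.cast_ne_zero.mpr (Nat.totient_pos.mpr (Nat.pos_of_ne_zero (NeZero.ne N))).ne'
  exact mul_left_cancel₀ ht key2


lemma orth_sum (T : ZMod N → ℂ) :
    ∑ χ : DirichletCharacter ℂ N,
      (∑ b : ZMod N, χ⁻¹ b * T b) * (starRingEnd ℂ) (∑ b : ZMod N, χ⁻¹ b * T b)
    = (N.totient : ℂ) * ∑ b : ZMod N, (if IsUnit b then T b * (starRingEnd ℂ) (T b) else 0) := by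
  have expand : ∀ χ : DirichletCharacter ℂ N,
      (∑ b : ZMod N, χ⁻¹ b * T b) * (starRingEnd ℂ) (∑ b : ZMod N, χ⁻¹ b * T b)
      = ∑ b : ZMod N, ∑ c : ZMod N, (χ⁻¹ b * χ c) * (T b * (starRingEnd ℂ) (T c)) := by
    intro χ
    rw [map_sum, Finset.sum_mul_sum]
    refine Finset.sum_congr rfl fun b _ => Finset.sum_congr rfl fun c _ => ?_
    rw [map_mul]
    have h2 : (starRingEnd ℂ) (χ⁻¹ c) = χ c := by
      rw [← RCLike.star_def, MulChar.star_apply', inv_inv]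
    rw [h2]; ring
  simp_rw [expand]
  rw [Finset.sum_comm]
  have swap : ∀ b : ZMod N,
      ∑ χ : DirichletCharacter ℂ N, ∑ c : ZMod N, (χ⁻¹ b * χ c) * (T b * (starRingEnd ℂ) (T c))
      = ∑ c : ZMod N, (∑ χ : DirichletCharacter ℂ N, χ⁻¹ b * χ c) * (T b * (starRingEnd ℂ) (T c)) := by
    intro b
    rw [Finset.sum_comm]
    exact Finset.sum_congr rfl fun c _ => by rw [Finset.sum_mul]
  simp_rw [swap]
  have inner : ∀ b c : ZMod N, (∑ χ : DirichletCharacter ℂ N, χ⁻¹ b * χ c)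
      = if IsUnit b ∧ b = c then (N.totient : ℂ) else 0 := by
    intro b c
    by_cases hb : IsUnit b
    · obtain ⟨u, rfl⟩ := hb
      have key := DirichletCharacter.sum_char_inv_mul_char_eq ℂ (a := (u : ZMod N)) u.isUnit c
      have hinv : ∀ χ : DirichletCharacter ℂ N, χ⁻¹ (u : ZMod N) = χ ((u : ZMod N)⁻¹) := by
        intro χ
        rw [MulChar.inv_apply, Ring.inverse_unit, ← ZMod.inv_coe_unit]
      simp_rw [hinv, key]
      simp [u.isUnit]
    · simp [MulChar.map_nonunit _ hb, hb]
  simp_rw [inner]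
  have collapse : ∀ b : ZMod N,
      ∑ c : ZMod N, (if IsUnit b ∧ b = c then (N.totient : ℂ) else 0) * (T b * (starRingEnd ℂ) (T c))
      = (N.totient : ℂ) * (if IsUnit b then T b * (starRingEnd ℂ) (T b) else 0) := by
    intro b
    by_cases hb : IsUnit b
    · simp only [hb, true_and, if_true, ite_mul, zero_mul]
      rw [Finset.sum_ite_eq Finset.univ b fun c => (N.totient : ℂ) * (T b * (starRingEnd ℂ) (T c))]
      simp [mul_assoc]
    · simp [hb]
  simp_rw [collapse, ← Finset.mul_sum]

end Helpers


theorem stmt13 (q : ℕ) (hq : 0 < q) (M : ℤ) (N : ℕ) (hN : 0 < N) (a : ℤ → ℂ) :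
    ∑ χ ∈ Finset.univ.filter
        (fun χ : DirichletCharacter ℂ (q^2) => χ.IsPrimitive),
      ‖∑ n ∈ Finset.Icc (M+1) (M+(N:ℤ)), a n * χ (n : ZMod (q^2))‖ ^ 2
    ≤ ((Nat.totient q : ℝ) / (q : ℝ)) *
      ∑ r ∈ (Finset.range (q^2)).filter (fun r => Nat.gcd r q = 1),
        ‖∑ n ∈ Finset.Icc (M+1) (M+(N:ℤ)), a n * e (((r:ℝ) * (n:ℝ)) / (q:ℝ)^2)‖ ^ 2 := by
  haveI : NeZero (q^2) := ⟨pow_ne_zero 2 hq.ne'⟩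
  set Q := q^2 with hQ
  set I := Finset.Icc (M+1) (M+(N:ℤ)) with hI
  set ψ : AddChar (ZMod Q) ℂ := ZMod.stdAddChar with hψdef
  set S : DirichletCharacter ℂ Q → ℂ := fun χ => ∑ n ∈ I, a n * χ (n : ZMod Q) with hS
  set T : ZMod Q → ℂ := fun b => ∑ n ∈ I, a n * ψ ((n : ZMod Q) * b) with hT
  set U : DirichletCharacter ℂ Q → ℂ := fun χ => ∑ b : ZMod Q, χ⁻¹ b * T b with hU
  -- Step 1: for primitive χ, U χ = S χ * gaussSum χ⁻¹ ψ
  have step1 : ∀ χ : DirichletCharacter ℂ Q, χ.IsPrimitive →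
      U χ = S χ * gaussSum χ⁻¹ ψ := by
    intro χ hχ
    have hinv := inv_primitive hχ
    calc U χ = ∑ b : ZMod Q, ∑ n ∈ I, χ⁻¹ b * (a n * ψ ((n : ZMod Q) * b)) := by
          rw [hU]; exact Finset.sum_congr rfl fun b _ => by rw [hT, Finset.mul_sum]
    _ = ∑ n ∈ I, ∑ b : ZMod Q, χ⁻¹ b * (a n * ψ ((n : ZMod Q) * b)) := Finset.sum_comm
    _ = ∑ n ∈ I, a n * (χ (n : ZMod Q) * gaussSum χ⁻¹ ψ) := by
          refine Finset.sum_congr rfl fun n _ => ?_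
          have h1 : ∑ b : ZMod Q, χ⁻¹ b * (a n * ψ ((n : ZMod Q) * b))
              = a n * gaussSum χ⁻¹ (ψ.mulShift (n : ZMod Q)) := by
            rw [gaussSum, Finset.mul_sum]
            exact Finset.sum_congr rfl fun b _ => by rw [AddChar.mulShift_apply]; ring
          rw [h1, gaussSum_mulShift_of_isPrimitive ψ hinv, inv_inv]
    _ = S χ * gaussSum χ⁻¹ ψ := by
          rw [hS, Finset.sum_mul]
          exact Finset.sum_congr rfl fun n _ => by ring
  -- Step 2: for primitive χ, normSq (U χ) = Q * normSq (S χ)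
  have step2 : ∀ χ : DirichletCharacter ℂ Q, χ.IsPrimitive →
      Complex.normSq (U χ) = (Q : ℝ) * Complex.normSq (S χ) := by
    intro χ hχ
    have hg := gauss_norm (inv_primitive hχ)
    rw [Complex.mul_conj] at hg
    have hg' : Complex.normSq (gaussSum χ⁻¹ ψ) = (Q : ℝ) := by exact_mod_cast hg
    rw [step1 χ hχ, Complex.normSq_mul, hg']
    ring
  -- Step 3: orthogonality
  have step3 : ∑ χ : DirichletCharacter ℂ Q, Complex.normSq (U χ)
      = (Q.totient : ℝ) * ∑ b : ZMod Q, (if IsUnit b then Complex.normSq (T b) else 0) := by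
    have horth := orth_sum T
    have hl : ∀ χ : DirichletCharacter ℂ Q,
        (∑ b : ZMod Q, χ⁻¹ b * T b) * (starRingEnd ℂ) (∑ b : ZMod Q, χ⁻¹ b * T b)
        = ((Complex.normSq (U χ) : ℝ) : ℂ) := fun χ => by
      rw [hU]; exact Complex.mul_conj _
    have hr : ∀ b : ZMod Q, (if IsUnit b then T b * (starRingEnd ℂ) (T b) else 0)
        = ((if IsUnit b then Complex.normSq (T b) else 0 : ℝ) : ℂ) := by
      intro b
      split_ifs
      · exact Complex.mul_conj _
      · exact Complex.ofReal_zero.symm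
    simp_rw [hl, hr] at horth
    exact_mod_cast horth
  -- Step 4: RHS translation
  have step4 : ∑ r ∈ (Finset.range Q).filter (fun r => Nat.gcd r q = 1),
        ‖∑ n ∈ I, a n * e (((r:ℝ) * (n:ℝ)) / (q:ℝ)^2)‖ ^ 2
      = ∑ b : ZMod Q, (if IsUnit b then Complex.normSq (T b) else 0) := by
    rw [← Finset.sum_filter]
    refine Finset.sum_nbij' (fun r => (r : ZMod Q)) (fun b => b.val) ?_ ?_ ?_ ?_ ?_
    · intro r hr
      rw [Finset.mem_filter] at hr ⊢
      refine ⟨Finset.mem_univ _, ?_⟩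
      rw [ZMod.isUnit_iff_coprime]
      exact Nat.Coprime.pow_right 2 hr.2
    · intro b hb
      rw [Finset.mem_filter] at hb ⊢
      constructor
      · exact Finset.mem_range.mpr (ZMod.val_lt b)
      · have hcop : Nat.Coprime (b.val) Q := by
          obtain ⟨u, rfl⟩ := hb.2
          exact ZMod.val_coe_unit_coprime u
        exact Nat.Coprime.coprime_dvd_right (dvd_pow_self q two_ne_zero) hcop
    · intro r hr
      exact ZMod.val_cast_of_lt (Finset.mem_range.mp (Finset.mem_filter.mp hr).1)
    · intro b _
      simp [ZMod.natCast_val, ZMod.cast_id]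
    · intro r hr
      rw [← Complex.sq_norm]
      congr 2
      refine Finset.sum_congr rfl fun n _ => ?_
      congr 1
      have hcast : (n : ZMod Q) * ((r : ℕ) : ZMod Q) = (((n * (r : ℤ)) : ℤ) : ZMod Q) := by
        push_cast; ring
      show e ((r:ℝ) * (n:ℝ) / (q:ℝ)^2) = ψ ((n : ZMod Q) * ((r:ℕ) : ZMod Q))
      rw [hcast, hψdef, ZMod.stdAddChar_coe]
      simp only [e]
      congr 1
      rw [hQ]
      push_cast
      rw [mul_div_assoc]
      ring
  -- Step 5 : totient
  have step5 : Q.totient = q * q.totient := by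
    have h := Nat.totient_gcd_mul_totient_mul q q
    rw [Nat.gcd_self] at h
    have hφ : 0 < q.totient := Nat.totient_pos.mpr hq
    have h2 : q * q = Q := (pow_two q).symm
    rw [h2, mul_assoc] at h
    have h3 := Nat.eq_of_mul_eq_mul_left hφ h
    rw [h3, Nat.mul_comm]
  -- combine
  set L : ℝ := ∑ χ ∈ Finset.univ.filter
      (fun χ : DirichletCharacter ℂ Q => χ.IsPrimitive), Complex.normSq (S χ) with hL
  set R : ℝ := ∑ b : ZMod Q, (if IsUnit b then Complex.normSq (T b) else 0) with hR
  have e1 : (Q : ℝ) * L = ∑ χ ∈ Finset.univ.filter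
      (fun χ : DirichletCharacter ℂ Q => χ.IsPrimitive), Complex.normSq (U χ) := by
    rw [hL, Finset.mul_sum]
    exact Finset.sum_congr rfl fun χ hχ => (step2 χ (Finset.mem_filter.mp hχ).2).symm
  have e2 : ∑ χ ∈ Finset.univ.filter
      (fun χ : DirichletCharacter ℂ Q => χ.IsPrimitive), Complex.normSq (U χ)
      ≤ ∑ χ : DirichletCharacter ℂ Q, Complex.normSq (U χ) :=
    Finset.sum_le_sum_of_subset_of_nonneg (Finset.filter_subset _ _)
      (fun χ _ _ => Complex.normSq_nonneg _)
  have hbound : (Q : ℝ) * L ≤ (Q.totient : ℝ) * R := by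
    rw [e1]; rw [step3] at *; exact e2
  have hLHS : ∑ χ ∈ Finset.univ.filter
        (fun χ : DirichletCharacter ℂ Q => χ.IsPrimitive),
      ‖∑ n ∈ I, a n * χ (n : ZMod Q)‖ ^ 2 = L := by
    exact Finset.sum_congr rfl fun χ _ => Complex.sq_norm _
  rw [hLHS, step4]
  have hq' : (0:ℝ) < q := by exact_mod_cast hq
  have hR0 : 0 ≤ R := by
    rw [hR]
    refine Finset.sum_nonneg fun b _ => ?_
    split_ifs
    · exact Complex.normSq_nonneg _
    · exact le_rfl
  rw [div_mul_eq_mul_div, le_div_iff₀ hq']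
  have h2 : (Q:ℝ) = q * q := by rw [hQ]; push_cast; ring
  have h3 : (Q.totient : ℝ) = q * q.totient := by rw [step5]; push_cast; ring
  rw [h2, h3] at hbound
  nlinarith [hbound, mul_le_mul_of_nonneg_left hbound (le_of_lt hq')]
end

section
/- For every ε > 0 there exists a constant C(ε) > 0 depending only on ε such that for all positive integers Q, N, all integers q with Q < q ≤ 2Q, and all integers a with gcd(a,q) = 1, one has ∑_{0 < m < N/Q} τ(m) · min{ Q, ‖a m / q²‖^{−1} } ≤ C(ε) · ( N/Q + Q² ) · N^ε, where τ(m) is the number of positive divisors of m. -/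
open Finset Real
open scoped Classical

noncomputable def dist01 (x : ℝ) : ℝ := |x - round x|


lemma tau_bound (δ : ℝ) (hδ : 0 < δ) : ∃ C : ℝ, 1 ≤ C ∧
    ∀ n : ℕ, n ≠ 0 → ((Nat.divisors n).card : ℝ) ≤ C * (n:ℝ) ^ δ := by
  classical
  set c : ℝ := δ * Real.log 2 with hc
  have hc0 : 0 < c := mul_pos hδ (Real.log_pos (by norm_num))
  set K : ℝ := max 1 (1/c) with hK
  have hK1 : 1 ≤ K := le_max_left _ _
  have hKc : 1 ≤ K * c := by
    calc (1:ℝ) = (1/c) * c := by field_simp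
    _ ≤ K * c := by gcongr; exact le_max_right _ _
  set P : ℕ := ⌊(2:ℝ) ^ ((1:ℝ)/δ)⌋₊ with hP
  refine ⟨K ^ (P+1), one_le_pow₀ hK1, ?_⟩
  intro n hn
  have key : ∀ p ∈ n.primeFactors, ((n.factorization p + 1 : ℕ) : ℝ) ≤
      (if (p:ℝ)^δ < 2 then K else 1) * ((p:ℝ) ^ (n.factorization p)) ^ δ := by
    intro p hp
    have hp2 : (2:ℝ) ≤ (p:ℝ) := by
      exact_mod_cast (Nat.prime_of_mem_primeFactors hp).two_le
    set e := n.factorization p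
    have hpe : ((p:ℝ)^δ)^(e:ℕ) = ((p:ℝ) ^ e) ^ δ := by
      rw [← Real.rpow_natCast ((p:ℝ)^δ) e, ← Real.rpow_mul (by positivity), mul_comm,
        Real.rpow_mul (by positivity), Real.rpow_natCast]
    by_cases h2 : (p:ℝ)^δ < 2
    · simp only [h2, if_pos]
      have hlow : (1:ℝ) + e * c ≤ ((p:ℝ) ^ e) ^ δ := by
        have h1 : (2:ℝ) ^ ((e:ℝ) * δ) ≤ ((p:ℝ)) ^ ((e:ℝ) * δ) :=
          Real.rpow_le_rpow (by norm_num) hp2 (by positivity)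
        have h2' : ((p:ℝ)) ^ ((e:ℝ) * δ) = ((p:ℝ) ^ e) ^ δ := by
          rw [Real.rpow_mul (by positivity), Real.rpow_natCast]
        have h3 : (2:ℝ) ^ ((e:ℝ) * δ) = Real.exp ((e:ℝ) * δ * Real.log 2) := by
          rw [Real.rpow_def_of_pos (by norm_num)]; ring_nf
        have h4 : (e:ℝ) * δ * Real.log 2 + 1 ≤ Real.exp ((e:ℝ) * δ * Real.log 2) :=
          Real.add_one_le_exp _
        calc (1:ℝ) + e * c = (e:ℝ) * δ * Real.log 2 + 1 := by rw [hc]; ring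
        _ ≤ Real.exp ((e:ℝ) * δ * Real.log 2) := h4
        _ = (2:ℝ) ^ ((e:ℝ) * δ) := h3.symm
        _ ≤ ((p:ℝ)) ^ ((e:ℝ) * δ) := h1
        _ = ((p:ℝ) ^ e) ^ δ := h2'
      have hek : ((e:ℕ):ℝ) + 1 ≤ K * (1 + e * c) := by nlinarith [Nat.cast_nonneg (α := ℝ) e]
      push_cast
      calc ((e:ℕ):ℝ) + 1 ≤ K * (1 + e*c) := hek
      _ ≤ K * ((p:ℝ)^e)^δ := mul_le_mul_of_nonneg_left hlow (by linarith)
    · simp only [h2, if_neg, not_false_iff, one_mul]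
      push_neg at h2
      have h1 : ((e:ℕ):ℝ) + 1 ≤ (2:ℝ)^(e:ℕ) := by
        exact_mod_cast Nat.lt_two_pow_self (n := e)
      push_cast
      calc ((e:ℕ):ℝ) + 1 ≤ (2:ℝ)^(e:ℕ) := h1
      _ ≤ ((p:ℝ)^δ)^(e:ℕ) := pow_le_pow_left₀ (by norm_num) h2 e
      _ = _ := hpe
  have hτ : ((Nat.divisors n).card : ℝ) = ∏ p ∈ n.primeFactors, ((n.factorization p + 1 : ℕ) : ℝ) := by
    rw [Nat.card_divisors hn]; push_cast; ring
  have hprod : ((Nat.divisors n).card : ℝ) ≤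
      ∏ p ∈ n.primeFactors, ((if (p:ℝ)^δ < 2 then K else 1) * ((p:ℝ) ^ (n.factorization p)) ^ δ) := by
    rw [hτ]
    exact Finset.prod_le_prod (fun p _ => by positivity) key
  rw [Finset.prod_mul_distrib] at hprod
  have hn' : ∏ p ∈ n.primeFactors, ((p:ℝ) ^ (n.factorization p)) ^ δ = (n:ℝ) ^ δ := by
    rw [Real.finset_prod_rpow _ _ (fun p _ => by positivity)]
    congr 1
    have := Nat.factorization_prod_pow_eq_self hn
    rw [Finsupp.prod] at this
    rw [Nat.support_factorization] at this
    exact_mod_cast congrArg (Nat.cast (R := ℝ)) this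
  have hite : ∏ p ∈ n.primeFactors, (if (p:ℝ)^δ < 2 then K else 1) ≤ K ^ (P+1) := by
    rw [← Finset.prod_filter]
    rw [Finset.prod_const]
    apply pow_le_pow_right₀ hK1
    have hsub : (Finset.filter (fun p : ℕ => (p:ℝ)^δ < 2) n.primeFactors) ⊆ Finset.range (P+1) := by
      intro p hp
      simp only [Finset.mem_filter] at hp
      rcases hp with ⟨hp1, hp2⟩
      have hppos : (0:ℝ) ≤ (p:ℝ) := by positivity
      have : (p:ℝ) < (2:ℝ) ^ ((1:ℝ)/δ) := by
        have := Real.rpow_lt_rpow (by positivity) hp2 (show (0:ℝ) < 1/δ by positivity)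
        rwa [← Real.rpow_mul hppos, mul_one_div, div_self hδ.ne', Real.rpow_one] at this
      have : p ≤ P := by rw [hP]; exact Nat.le_floor this.le
      simpa [Finset.mem_range] using Nat.lt_succ_of_le this
    exact (Finset.card_le_card hsub).trans (by simp)
  calc ((Nat.divisors n).card : ℝ) ≤ _ := hprod
  _ ≤ K^(P+1) * (n:ℝ)^δ := by rw [hn']; exact mul_le_mul_of_nonneg_right hite (Real.rpow_nonneg (by positivity) δ)



lemma dist01_nonneg (x : ℝ) : 0 ≤ dist01 x := abs_nonneg _

lemma dist01_int_add (x : ℝ) (k : ℤ) : dist01 (x + k) = dist01 x := by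
  unfold dist01
  rw [round_add_intCast]
  push_cast
  ring_nf

lemma dist01_ge (x : ℝ) (h0 : 0 ≤ x) (h1 : x ≤ 1) : min x (1-x) ≤ dist01 x := by
  unfold dist01
  rcases le_or_gt (round x) 0 with h | h
  · have : (round x : ℝ) ≤ 0 := by exact_mod_cast h
    calc min x (1-x) ≤ x := min_le_left _ _
    _ ≤ x - round x := by linarith
    _ ≤ |x - round x| := le_abs_self _
  · have : (1:ℝ) ≤ (round x : ℝ) := by exact_mod_cast h
    calc min x (1-x) ≤ 1 - x := min_le_right _ _
    _ ≤ (round x : ℝ) - x := by linarith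
    _ ≤ |x - round x| := by rw [abs_sub_comm]; exact le_abs_self _

lemma harmonic_sum_le (n : ℕ) : ∑ r ∈ Finset.Ico 1 n, ((r:ℝ))⁻¹ ≤ 1 + Real.log n := by
  have h1 : ∑ r ∈ Finset.Ico 1 n, ((r:ℝ))⁻¹ ≤ ∑ r ∈ Finset.Icc 1 n, ((r:ℝ))⁻¹ := by
    apply Finset.sum_le_sum_of_subset_of_nonneg
    · intro x hx; simp only [Finset.mem_Ico, Finset.mem_Icc] at *; omega
    · intro i _ _; positivity
  have h2 : ∑ r ∈ Finset.Icc 1 n, ((r:ℝ))⁻¹ = (harmonic n : ℝ) := by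
    rw [harmonic_eq_sum_Icc]; push_cast; ring
  rw [h2] at h1
  exact h1.trans (harmonic_le_one_add_log n)

lemma residue_sum (Q n : ℕ) (hn : 0 < n) :
    ∑ r ∈ Finset.range n,
      min (Q:ℝ) (if dist01 ((r:ℝ)/(n:ℝ)) = 0 then (Q:ℝ) else (dist01 ((r:ℝ)/(n:ℝ)))⁻¹)
    ≤ Q + 2*n*(1 + Real.log n) := by
  set f : ℕ → ℝ := fun r =>
    min (Q:ℝ) (if dist01 ((r:ℝ)/(n:ℝ)) = 0 then (Q:ℝ) else (dist01 ((r:ℝ)/(n:ℝ)))⁻¹) with hf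
  have hnR : (0:ℝ) < n := by exact_mod_cast hn
  have hsplit : ∑ r ∈ Finset.range n, f r = f 0 + ∑ r ∈ Finset.Ico 1 n, f r := by
    rw [Finset.range_eq_Ico, ← Finset.sum_Ico_consecutive f (by norm_num) hn]
    congr 1
    simp
  have hf0 : f 0 = Q := by
    have h00 : dist01 ((0:ℝ)/(n:ℝ)) = 0 := by
      unfold dist01; norm_num
    simp only [hf, Nat.cast_zero, h00, if_true, eq_self_iff_true, min_self]
  have hbound : ∀ r ∈ Finset.Ico 1 n, f r ≤ (n:ℝ)/(r:ℝ) + (n:ℝ)/(((n-r:ℕ)):ℝ) := by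
    intro r hr
    simp only [Finset.mem_Ico] at hr
    obtain ⟨hr1, hrn⟩ := hr
    have hrR : (0:ℝ) < (r:ℝ) := by exact_mod_cast hr1
    have hnr : 0 < n - r := by omega
    have hnrR : (0:ℝ) < ((n-r:ℕ):ℝ) := by exact_mod_cast hnr
    have hcast : ((n-r:ℕ):ℝ) = (n:ℝ) - (r:ℝ) := by
      rw [Nat.cast_sub hrn.le]
    have hx0 : (0:ℝ) ≤ (r:ℝ)/(n:ℝ) := by positivity
    have hx1 : (r:ℝ)/(n:ℝ) ≤ 1 := by
      rw [div_le_one hnR]; exact_mod_cast hrn.le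
    have hmin : (0:ℝ) < min ((r:ℝ)/(n:ℝ)) (1 - (r:ℝ)/(n:ℝ)) := by
      apply lt_min
      · positivity
      · rw [sub_pos, div_lt_one hnR]; exact_mod_cast hrn
    have hd : min ((r:ℝ)/(n:ℝ)) (1 - (r:ℝ)/(n:ℝ)) ≤ dist01 ((r:ℝ)/(n:ℝ)) :=
      dist01_ge _ hx0 hx1
    have hdpos : 0 < dist01 ((r:ℝ)/(n:ℝ)) := lt_of_lt_of_le hmin hd
    have : f r ≤ (dist01 ((r:ℝ)/(n:ℝ)))⁻¹ := by
      simp only [hf, if_neg hdpos.ne']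
      exact min_le_right _ _
    refine this.trans ?_
    have hinv : (dist01 ((r:ℝ)/(n:ℝ)))⁻¹ ≤ (min ((r:ℝ)/(n:ℝ)) (1 - (r:ℝ)/(n:ℝ)))⁻¹ :=
      one_div_le_one_div_of_le hmin hd |>.trans_eq (by rw [one_div]) |>.trans_eq' (by rw [one_div])
    refine hinv.trans ?_
    have e1 : ((r:ℝ)/(n:ℝ))⁻¹ = (n:ℝ)/(r:ℝ) := by rw [inv_div]
    have e2 : (1 - (r:ℝ)/(n:ℝ))⁻¹ = (n:ℝ)/(((n-r:ℕ)):ℝ) := by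
      rw [hcast]
      rw [show (1:ℝ) - (r:ℝ)/(n:ℝ) = ((n:ℝ)-(r:ℝ))/(n:ℝ) by field_simp]
      rw [inv_div]
    rcases min_cases ((r:ℝ)/(n:ℝ)) (1 - (r:ℝ)/(n:ℝ)) with ⟨h, _⟩ | ⟨h, _⟩
    · rw [h, e1]
      have : (0:ℝ) ≤ (n:ℝ)/(((n-r:ℕ)):ℝ) := by positivity
      linarith
    · rw [h, e2]
      have : (0:ℝ) ≤ (n:ℝ)/(r:ℝ) := by positivity
      linarith
  have hsum1 : ∑ r ∈ Finset.Ico 1 n, (n:ℝ)/(r:ℝ) ≤ (n:ℝ)*(1 + Real.log n) := by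
    have : ∑ r ∈ Finset.Ico 1 n, (n:ℝ)/(r:ℝ) = (n:ℝ) * ∑ r ∈ Finset.Ico 1 n, ((r:ℝ))⁻¹ := by
      rw [Finset.mul_sum]
      refine Finset.sum_congr rfl fun r _ => ?_
      rw [div_eq_mul_inv]
    rw [this]
    exact mul_le_mul_of_nonneg_left (harmonic_sum_le n) (by positivity)
  have hsum2 : ∑ r ∈ Finset.Ico 1 n, (n:ℝ)/(((n-r:ℕ)):ℝ) = ∑ r ∈ Finset.Ico 1 n, (n:ℝ)/(r:ℝ) := by
    refine Finset.sum_nbij' (fun r => n - r) (fun r => n - r) ?_ ?_ ?_ ?_ ?_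
    · intro a ha; simp only [Finset.mem_Ico] at *; omega
    · intro a ha; simp only [Finset.mem_Ico] at *; omega
    · intro a ha; simp only [Finset.mem_Ico] at *; omega
    · intro a ha; simp only [Finset.mem_Ico] at *; omega
    · intro a ha; rfl
  calc ∑ r ∈ Finset.range n, f r = f 0 + ∑ r ∈ Finset.Ico 1 n, f r := hsplit
  _ ≤ (Q:ℝ) + ∑ r ∈ Finset.Ico 1 n, ((n:ℝ)/(r:ℝ) + (n:ℝ)/(((n-r:ℕ)):ℝ)) := by
      rw [hf0]; exact add_le_add (le_refl _) (Finset.sum_le_sum hbound)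
  _ = (Q:ℝ) + (∑ r ∈ Finset.Ico 1 n, (n:ℝ)/(r:ℝ) + ∑ r ∈ Finset.Ico 1 n, (n:ℝ)/(((n-r:ℕ)):ℝ)) := by
      rw [Finset.sum_add_distrib]
  _ ≤ (Q:ℝ) + ((n:ℝ)*(1 + Real.log n) + (n:ℝ)*(1 + Real.log n)) := by
      rw [hsum2]; linarith
  _ = Q + 2*n*(1 + Real.log n) := by ring

lemma block_sum (Q q : ℕ) (hq : 0 < q) (a : ℤ) (hgcd : Int.gcd a q = 1) (M : ℕ) :
    ∑ m ∈ Finset.range M,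
      min (Q:ℝ) (if dist01 ((a:ℝ)*(m:ℝ)/(q:ℝ)^2) = 0 then (Q:ℝ)
                 else (dist01 ((a:ℝ)*(m:ℝ)/(q:ℝ)^2))⁻¹)
    ≤ ((M / q^2 : ℕ) + 1 : ℝ) * ((Q:ℝ) + 2*((q^2:ℕ):ℝ)*(1 + Real.log ((q^2:ℕ):ℝ))) := by
  classical
  set n : ℕ := q^2 with hn
  have hn0 : 0 < n := by positivity
  have hnZ : (0:ℤ) < (n:ℤ) := by exact_mod_cast hn0
  have hnR : (0:ℝ) < (n:ℝ) := by exact_mod_cast hn0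
  -- residue function
  set g : ℕ → ℝ := fun r =>
    min (Q:ℝ) (if dist01 ((r:ℝ)/(n:ℝ)) = 0 then (Q:ℝ) else (dist01 ((r:ℝ)/(n:ℝ)))⁻¹) with hg
  have hg0 : ∀ r, 0 ≤ g r := by
    intro r
    apply le_min (by positivity)
    split
    · positivity
    · exact inv_nonneg.mpr (abs_nonneg _)
  set φ : ℕ → ℕ := fun m => (a * m % (n:ℤ)).toNat with hφ
  have hφlt : ∀ m, φ m < n := by
    intro m
    have h1 := Int.emod_lt_of_pos (a * m) hnZ
    have h2 := Int.emod_nonneg (a * m) (by exact_mod_cast hn0.ne' : (n:ℤ) ≠ 0)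
    show (a * m % (n:ℤ)).toNat < n
    omega
  -- the summand equals g ∘ φ
  have hterm : ∀ m : ℕ,
      min (Q:ℝ) (if dist01 ((a:ℝ)*(m:ℝ)/(q:ℝ)^2) = 0 then (Q:ℝ)
                 else (dist01 ((a:ℝ)*(m:ℝ)/(q:ℝ)^2))⁻¹) = g (φ m) := by
    intro m
    have hq2 : ((q:ℝ))^2 = (n:ℝ) := by rw [hn]; push_cast; ring
    have hmod : a * m = (n:ℤ) * (a * m / (n:ℤ)) + a * m % (n:ℤ) := (Int.mul_ediv_add_emod _ _).symm
    have hcast : ((φ m : ℕ):ℝ) = ((a * m % (n:ℤ) : ℤ):ℝ) := by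
      have h2 := Int.emod_nonneg (a * m) (by exact_mod_cast hn0.ne' : (n:ℤ) ≠ 0)
      show (((a * m % (n:ℤ)).toNat : ℕ):ℝ) = _
      rw [← Int.cast_natCast, Int.toNat_of_nonneg h2]
    have hmodR : (a:ℝ)*(m:ℝ) = (n:ℝ)*((a * m / (n:ℤ) : ℤ):ℝ) + ((a * m % (n:ℤ) : ℤ):ℝ) := by
      exact_mod_cast congrArg (fun z : ℤ => (z:ℝ)) hmod
    have hx : (a:ℝ)*(m:ℝ)/(q:ℝ)^2 = ((φ m : ℕ):ℝ)/(n:ℝ) + ((a * m / (n:ℤ) : ℤ):ℝ) := by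
      rw [hq2, hcast, hmodR]
      field_simp
      ring
    rw [hx, dist01_int_add]
  -- injectivity on blocks
  have hcop : Int.gcd (n:ℤ) a = 1 := by
    have h1 : IsCoprime a (q:ℤ) := Int.isCoprime_iff_gcd_eq_one.mpr hgcd
    have h2 : IsCoprime ((n:ℤ)) a := by
      rw [hn]
      push_cast
      exact (h1.pow_right).symm
    exact Int.isCoprime_iff_gcd_eq_one.mp h2
  have hinj : ∀ j : ℕ, ∀ m1 ∈ Finset.Ico (j*n) ((j+1)*n), ∀ m2 ∈ Finset.Ico (j*n) ((j+1)*n),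
      φ m1 = φ m2 → m1 = m2 := by
    intro j m1 hm1 m2 hm2 heq
    simp only [Finset.mem_Ico] at hm1 hm2
    have h2a := Int.emod_nonneg (a * m1) (by exact_mod_cast hn0.ne' : (n:ℤ) ≠ 0)
    have h2b := Int.emod_nonneg (a * m2) (by exact_mod_cast hn0.ne' : (n:ℤ) ≠ 0)
    have hmodeq : a * m1 ≡ a * m2 [ZMOD (n:ℤ)] := by
      have hc := congrArg (Nat.cast : ℕ → ℤ) heq
      simp only [hφ, Int.toNat_of_nonneg h2a, Int.toNat_of_nonneg h2b] at hc
      exact hc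
    have hmm : (m1:ℤ) ≡ (m2:ℤ) [ZMOD (n:ℤ)] := by
      have := Int.ModEq.cancel_left_div_gcd hnZ hmodeq
      rw [hcop] at this
      simpa using this
    have hdvd : (n:ℤ) ∣ (m2:ℤ) - (m1:ℤ) := Int.ModEq.dvd hmm
    obtain ⟨k, hk⟩ := hdvd
    have hb1 : (j*n : ℤ) ≤ (m1:ℤ) := by exact_mod_cast hm1.1
    have hb2 : ((m1:ℤ)) < ((j+1)*n : ℤ) := by exact_mod_cast hm1.2
    have hb3 : (j*n : ℤ) ≤ (m2:ℤ) := by exact_mod_cast hm2.1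
    have hb4 : ((m2:ℤ)) < ((j+1)*n : ℤ) := by exact_mod_cast hm2.2
    have hk0 : k = 0 := by
      by_contra hk0
      rcases lt_or_gt_of_ne hk0 with h | h
      · have : k ≤ -1 := by omega
        nlinarith
      · have : 1 ≤ k := by omega
        nlinarith
    have : (m1:ℤ) = (m2:ℤ) := by rw [hk0] at hk; omega
    exact_mod_cast this
  -- block bound
  set B : ℝ := ∑ r ∈ Finset.range n, g r with hB
  have hblock : ∀ j : ℕ, ∑ m ∈ Finset.Ico (j*n) ((j+1)*n), g (φ m) ≤ B := by
    intro j
    rw [← Finset.sum_image (hinj j)]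
    apply Finset.sum_le_sum_of_subset_of_nonneg
    · intro r hr
      simp only [Finset.mem_image] at hr
      obtain ⟨m, _, rfl⟩ := hr
      exact Finset.mem_range.mpr (hφlt m)
    · intro i _ _; exact hg0 i
  -- covering
  have hcover : ∀ K : ℕ, ∑ m ∈ Finset.range (K*n), g (φ m) ≤ K * B := by
    intro K
    induction K with
    | zero => simp
    | succ K ih =>
      have hsp : ∑ m ∈ Finset.range ((K+1)*n), g (φ m)
          = ∑ m ∈ Finset.range (K*n), g (φ m) + ∑ m ∈ Finset.Ico (K*n) ((K+1)*n), g (φ m) := by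
        rw [Finset.range_eq_Ico, Finset.range_eq_Ico]
        exact (Finset.sum_Ico_consecutive _ (Nat.zero_le _)
          (Nat.mul_le_mul_right n (Nat.le_succ K))).symm
      rw [hsp]
      push_cast
      have := hblock K
      linarith
  -- put it together
  set K : ℕ := M / n + 1 with hK
  have hMK : M ≤ K * n := by
    rw [hK]
    have h1 := Nat.div_add_mod M n
    have h2 := Nat.mod_lt M hn0
    nlinarith
  calc ∑ m ∈ Finset.range M,
      min (Q:ℝ) (if dist01 ((a:ℝ)*(m:ℝ)/(q:ℝ)^2) = 0 then (Q:ℝ)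
                 else (dist01 ((a:ℝ)*(m:ℝ)/(q:ℝ)^2))⁻¹)
      = ∑ m ∈ Finset.range M, g (φ m) := Finset.sum_congr rfl (fun m _ => hterm m)
    _ ≤ ∑ m ∈ Finset.range (K*n), g (φ m) := by
        apply Finset.sum_le_sum_of_subset_of_nonneg
        · exact Finset.range_subset_range.mpr hMK
        · intro i _ _; exact hg0 (φ i)
    _ ≤ K * B := hcover K
    _ ≤ ((M / q^2 : ℕ) + 1 : ℝ) * ((Q:ℝ) + 2*((q^2:ℕ):ℝ)*(1 + Real.log ((q^2:ℕ):ℝ))) := by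
        have h1 : B ≤ (Q:ℝ) + 2*(n:ℝ)*(1 + Real.log (n:ℝ)) := residue_sum Q n hn0
        have hBnn : 0 ≤ B := Finset.sum_nonneg fun i _ => hg0 i
        have hKeq : (K:ℝ) = ((M / q^2 : ℕ):ℝ) + 1 := by rw [hK, hn]; push_cast; ring
        rw [← hKeq, ← hn]
        exact mul_le_mul_of_nonneg_left h1 (by positivity)


lemma term_nonneg (Q : ℕ) (x : ℝ) :
    0 ≤ min (Q:ℝ) (if dist01 x = 0 then (Q:ℝ) else (dist01 x)⁻¹) := by
  apply le_min (by positivity)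
  split
  · positivity
  · exact inv_nonneg.mpr (dist01_nonneg x)

set_option maxHeartbeats 1000000 in
theorem stmt17 : ∀ ε : ℝ, ε > 0 → ∃ C : ℝ, C > 0 ∧
    ∀ (Q N : ℕ), 0 < Q → 0 < N → ∀ q : ℕ, Q < q → q ≤ 2*Q → ∀ a : ℤ, Int.gcd a q = 1 →
    ∑ m ∈ (Finset.range N).filter (fun m : ℕ => 0 < m ∧ (m:ℝ) < (N:ℝ)/(Q:ℝ)),
      ((Nat.divisors m).card : ℝ) *
        min (Q:ℝ) (if dist01 ((a:ℝ)*(m:ℝ)/(q:ℝ)^2) = 0 then (Q:ℝ)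
                   else (dist01 ((a:ℝ)*(m:ℝ)/(q:ℝ)^2))⁻¹)
    ≤ C * ((N:ℝ)/(Q:ℝ) + (Q:ℝ)^2) * (N:ℝ)^ε := by
  intro ε hε
  set δ : ℝ := ε/2 with hδdef
  have hδ : 0 < δ := by positivity
  obtain ⟨C₁, hC₁1, hC₁⟩ := tau_bound δ hδ
  have hC₁0 : 0 < C₁ := lt_of_lt_of_le one_pos hC₁1
  refine ⟨C₁ * (12 * (4 + 2/δ)), by positivity, ?_⟩
  intro Q N hQ hN q hq1 hq2 a hgcd
  have hQR : (1:ℝ) ≤ (Q:ℝ) := by exact_mod_cast hQ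
  have hNR : (1:ℝ) ≤ (N:ℝ) := by exact_mod_cast hN
  set F : ℕ → ℝ := fun m =>
    min (Q:ℝ) (if dist01 ((a:ℝ)*(m:ℝ)/(q:ℝ)^2) = 0 then (Q:ℝ)
               else (dist01 ((a:ℝ)*(m:ℝ)/(q:ℝ)^2))⁻¹) with hF
  have hF0 : ∀ m, 0 ≤ F m := fun m => term_nonneg Q _
  have hNε : (0:ℝ) < (N:ℝ)^ε := Real.rpow_pos_of_pos (by linarith) ε
  by_cases hQN : N ≤ Q
  · -- the sum is empty
    have hempty : (Finset.range N).filter (fun m : ℕ => 0 < m ∧ (m:ℝ) < (N:ℝ)/(Q:ℝ)) = ∅ := by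
      apply Finset.filter_false_of_mem
      intro m hm
      rintro ⟨hm1, hm2⟩
      have h1 : (1:ℝ) ≤ (m:ℝ) := by exact_mod_cast hm1
      have h2 : (N:ℝ)/(Q:ℝ) ≤ 1 := by
        rw [div_le_one (by linarith)]
        exact_mod_cast hQN
      linarith
    rw [hempty, Finset.sum_empty]
    have hA0 : (0:ℝ) ≤ (N:ℝ)/(Q:ℝ) + (Q:ℝ)^2 := by positivity
    positivity
  · push_neg at hQN
    have hQNR : (Q:ℝ) < (N:ℝ) := by exact_mod_cast hQN
    set M : ℕ := N / Q with hM
    -- Step A : bound tau and enlarge range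
    have hstepA : ∑ m ∈ (Finset.range N).filter (fun m : ℕ => 0 < m ∧ (m:ℝ) < (N:ℝ)/(Q:ℝ)),
        ((Nat.divisors m).card : ℝ) * F m ≤ (C₁ * (N:ℝ)^δ) * ∑ m ∈ Finset.range (M+1), F m := by
      calc ∑ m ∈ (Finset.range N).filter (fun m : ℕ => 0 < m ∧ (m:ℝ) < (N:ℝ)/(Q:ℝ)),
          ((Nat.divisors m).card : ℝ) * F m
          ≤ ∑ m ∈ (Finset.range N).filter (fun m : ℕ => 0 < m ∧ (m:ℝ) < (N:ℝ)/(Q:ℝ)),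
            (C₁ * (N:ℝ)^δ) * F m := by
            apply Finset.sum_le_sum
            intro m hm
            simp only [Finset.mem_filter, Finset.mem_range] at hm
            obtain ⟨hmN, hm1, _⟩ := hm
            have hτ : ((Nat.divisors m).card : ℝ) ≤ C₁ * (N:ℝ)^δ := by
              refine (hC₁ m hm1.ne').trans ?_
              have : (m:ℝ)^δ ≤ (N:ℝ)^δ :=
                Real.rpow_le_rpow (by positivity) (by exact_mod_cast hmN.le) hδ.le
              exact mul_le_mul_of_nonneg_left this hC₁0.le
            exact mul_le_mul_of_nonneg_right hτ (hF0 m)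
        _ ≤ ∑ m ∈ Finset.range (M+1), (C₁ * (N:ℝ)^δ) * F m := by
            apply Finset.sum_le_sum_of_subset_of_nonneg
            · intro m hm
              simp only [Finset.mem_filter, Finset.mem_range] at hm ⊢
              obtain ⟨_, _, hm2⟩ := hm
              have hmQ : m * Q < N := by
                have : (m:ℝ) * (Q:ℝ) < (N:ℝ) := by
                  rw [← lt_div_iff₀ (by linarith : (0:ℝ) < (Q:ℝ))]
                  exact hm2
                exact_mod_cast this
              have : m ≤ M := by
                rw [hM]
                exact Nat.le_div_iff_mul_le hQ |>.mpr hmQ.le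
              omega
            · intro m _ _
              exact mul_nonneg (by positivity) (hF0 m)
        _ = (C₁ * (N:ℝ)^δ) * ∑ m ∈ Finset.range (M+1), F m := by
            rw [Finset.mul_sum]
    -- Step B : block sum
    have hstepB := block_sum Q q (by omega) a hgcd (M+1)
    -- Step C : numerics
    set A : ℝ := (N:ℝ)/(Q:ℝ) + (Q:ℝ)^2 with hA
    set L : ℝ := 1 + Real.log ((q^2:ℕ):ℝ) with hL
    have hq2cast : ((q^2:ℕ):ℝ) = (q:ℝ)^2 := by push_cast; ring
    have hqR : (1:ℝ) ≤ (q:ℝ) := by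
      have : 1 ≤ q := by omega
      exact_mod_cast this
    have hL1 : 1 ≤ L := by
      rw [hL]
      have : 0 ≤ Real.log ((q^2:ℕ):ℝ) := by
        apply Real.log_nonneg
        rw [hq2cast]
        nlinarith
      linarith
    have hq4Q : (q:ℝ) ≤ 2*(Q:ℝ) := by exact_mod_cast hq2
    have hQq : (Q:ℝ) < (q:ℝ) := by exact_mod_cast hq1
    have hq2le : (q:ℝ)^2 ≤ 4*(Q:ℝ)^2 := by nlinarith
    have hQleq2 : (Q:ℝ) ≤ (q:ℝ)^2 := by nlinarith
    have hLN : L ≤ (4 + 2/δ) * (N:ℝ)^δ := by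
      have hlog : Real.log ((q^2:ℕ):ℝ) ≤ Real.log (4*(N:ℝ)^2) := by
        apply Real.log_le_log (by rw [hq2cast]; nlinarith)
        rw [hq2cast]; nlinarith
      have hlog2 : Real.log (4*(N:ℝ)^2) = Real.log 4 + 2 * Real.log (N:ℝ) := by
        rw [Real.log_mul (by norm_num) (by positivity), Real.log_pow]
        push_cast; ring
      have hlog4 : Real.log 4 ≤ 3 := by
        have := Real.log_le_sub_one_of_pos (show (0:ℝ) < 4 by norm_num)
        linarith
      have hlogN : Real.log (N:ℝ) ≤ (N:ℝ)^δ / δ :=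
        Real.log_le_rpow_div (by positivity) hδ
      have hN1 : (1:ℝ) ≤ (N:ℝ)^δ := Real.one_le_rpow hNR hδ.le
      rw [hL]
      have h2d : 2 * Real.log (N:ℝ) ≤ (2/δ) * (N:ℝ)^δ := by
        calc 2 * Real.log (N:ℝ) ≤ 2 * ((N:ℝ)^δ / δ) := by linarith
        _ = (2/δ) * (N:ℝ)^δ := by ring
      calc 1 + Real.log ((q^2:ℕ):ℝ) ≤ 1 + (Real.log 4 + 2 * Real.log (N:ℝ)) := by
            rw [← hlog2]; linarith
        _ ≤ 4 + (2/δ) * (N:ℝ)^δ := by linarith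
        _ ≤ 4 * (N:ℝ)^δ + (2/δ) * (N:ℝ)^δ := by nlinarith
        _ = (4 + 2/δ) * (N:ℝ)^δ := by ring
    have hMcast : (M:ℝ) ≤ (N:ℝ)/(Q:ℝ) := by
      rw [hM]; exact Nat.cast_div_le
    have hXcast : (((M+1) / q^2 : ℕ):ℝ) ≤ ((M:ℝ)+1)/((q:ℝ)^2) := by
      have := Nat.cast_div_le (α := ℝ) (m := M+1) (n := q^2)
      calc (((M+1) / q^2 : ℕ):ℝ) ≤ ((M+1 : ℕ):ℝ)/((q^2:ℕ):ℝ) := this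
      _ = ((M:ℝ)+1)/((q:ℝ)^2) := by rw [hq2cast]; push_cast; ring
    have hq2pos : (0:ℝ) < (q:ℝ)^2 := by positivity
    have hBpos : (0:ℝ) ≤ (Q:ℝ) + 2*((q^2:ℕ):ℝ)*L := by
      rw [hq2cast]; nlinarith
    have hApos : (0:ℝ) < A := by rw [hA]; positivity
    have hm'A : (M:ℝ) + 1 ≤ A := by
      rw [hA]
      have : (1:ℝ) ≤ (Q:ℝ)^2 := by nlinarith
      linarith
    have hstepC : ((((M+1) / q^2 : ℕ):ℝ) + 1) * ((Q:ℝ) + 2*((q^2:ℕ):ℝ)*L) ≤ 12 * A * L := by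
      have hexp : (((M:ℝ)+1)/((q:ℝ)^2) + 1) * ((Q:ℝ) + 2*((q:ℝ)^2)*L)
          = ((M:ℝ)+1)*(Q:ℝ)/((q:ℝ)^2) + 2*((M:ℝ)+1)*L + (Q:ℝ) + 2*((q:ℝ)^2)*L := by
        field_simp
        ring
      have ht1 : ((M:ℝ)+1)*(Q:ℝ)/((q:ℝ)^2) ≤ (M:ℝ)+1 := by
        rw [div_le_iff₀ hq2pos]
        nlinarith
      have hL0 : (0:ℝ) ≤ L := le_trans zero_le_one hL1
      have hQ2A : (Q:ℝ)^2 ≤ A := by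
        rw [hA]
        have : (0:ℝ) ≤ (N:ℝ)/(Q:ℝ) := by positivity
        linarith
      have ht2 : (M:ℝ)+1 ≤ A * L := by
        calc (M:ℝ)+1 ≤ A := hm'A
        _ = A * 1 := (mul_one A).symm
        _ ≤ A * L := mul_le_mul_of_nonneg_left hL1 hApos.le
      have ht3 : 2*((M:ℝ)+1)*L ≤ 2*(A*L) := by
        have := mul_le_mul_of_nonneg_right hm'A hL0
        linarith
      have ht4 : (Q:ℝ) ≤ A * L := by
        have h1 : (Q:ℝ) ≤ (Q:ℝ)^2 := by nlinarith
        calc (Q:ℝ) ≤ A := le_trans h1 hQ2A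
        _ = A * 1 := (mul_one A).symm
        _ ≤ A * L := mul_le_mul_of_nonneg_left hL1 hApos.le
      have ht5 : 2*((q:ℝ)^2)*L ≤ 8*(A*L) := by
        have h3 : (q:ℝ)^2 ≤ 4*A := by linarith
        have := mul_le_mul_of_nonneg_right h3 hL0
        linarith
      calc ((((M+1) / q^2 : ℕ):ℝ) + 1) * ((Q:ℝ) + 2*((q^2:ℕ):ℝ)*L)
          ≤ (((M:ℝ)+1)/((q:ℝ)^2) + 1) * ((Q:ℝ) + 2*((q:ℝ)^2)*L) := by
            rw [hq2cast] at hBpos ⊢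
            apply mul_le_mul_of_nonneg_right _ hBpos
            linarith
        _ = ((M:ℝ)+1)*(Q:ℝ)/((q:ℝ)^2) + 2*((M:ℝ)+1)*L + (Q:ℝ) + 2*((q:ℝ)^2)*L := hexp
        _ ≤ (A*L) + 2*(A*L) + (A*L) + 8*(A*L) :=
            add_le_add (add_le_add (add_le_add (ht1.trans ht2) ht3) ht4) ht5
        _ = 12 * A * L := by ring
    -- combine
    have hfinal : ∑ m ∈ (Finset.range N).filter (fun m : ℕ => 0 < m ∧ (m:ℝ) < (N:ℝ)/(Q:ℝ)),
        ((Nat.divisors m).card : ℝ) * F m ≤ C₁ * (12 * (4 + 2/δ)) * A * (N:ℝ)^ε := by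
      have hNδ : (0:ℝ) < (N:ℝ)^δ := Real.rpow_pos_of_pos (by linarith) δ
      calc ∑ m ∈ (Finset.range N).filter (fun m : ℕ => 0 < m ∧ (m:ℝ) < (N:ℝ)/(Q:ℝ)),
          ((Nat.divisors m).card : ℝ) * F m
          ≤ (C₁ * (N:ℝ)^δ) * ∑ m ∈ Finset.range (M+1), F m := hstepA
        _ ≤ (C₁ * (N:ℝ)^δ) * (((((M+1) / q^2 : ℕ):ℝ) + 1) * ((Q:ℝ) + 2*((q^2:ℕ):ℝ)*L)) := by
            apply mul_le_mul_of_nonneg_left _ (by positivity)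
            exact hstepB
        _ ≤ (C₁ * (N:ℝ)^δ) * (12 * A * L) := by
            apply mul_le_mul_of_nonneg_left hstepC (by positivity)
        _ ≤ (C₁ * (N:ℝ)^δ) * (12 * A * ((4 + 2/δ) * (N:ℝ)^δ)) := by
            apply mul_le_mul_of_nonneg_left _ (by positivity)
            apply mul_le_mul_of_nonneg_left hLN (by positivity)
        _ = C₁ * (12 * (4 + 2/δ)) * A * ((N:ℝ)^δ * (N:ℝ)^δ) := by ring
        _ = C₁ * (12 * (4 + 2/δ)) * A * (N:ℝ)^ε := by
            rw [← Real.rpow_add (by linarith : (0:ℝ) < (N:ℝ))]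
            congr 2
            rw [hδdef]
            ring
    exact hfinal
end
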